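/- Let π : G → H be a continuous surjective homomorphism of topological groups such that for each normal admissible subgroup K of G, the image π(K) contains a normal admissible subgroup of H. If G is simply sm-factorizable and H is ω-narrow, then H is simply sm-factorizable. -/

import Mathlib

open Topology TopologicalSpace Pointwise Function Set

def IsCozero {X : Type*} [TopologicalSpace X] (U : Set X) : Prop :=
  ∃ f : X → ℝ, Continuous f ∧ U = f ⁻¹' {x : ℝ | x ≠ 0}

/-- A topological group is simply sm-factorizable if every cozero set is saturated with
respect to some continuous surjective homomorphism onto a separable metrizable topological group. -/
def SimplySMFactorizable (G : Type*) [Group G] [TopologicalSpace G] : Prop :=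
  ∀ U : Set G, IsCozero U →
    ∃ (H : Type) (gH : Group H) (tH : TopologicalSpace H),
      letI := gH
      letI := tH
      IsTopologicalGroup H ∧ SeparableSpace H ∧ MetrizableSpace H ∧
        ∃ π : G →* H, Continuous π ∧ Surjective π ∧ ⇑π ⁻¹' (⇑π '' U) = U

/-- A subset N of a topological group is an admissible subgroup if it is the intersection of a
sequence of open symmetric neighborhoods of the identity with Uₙ₊₁·Uₙ₊₁ ⊆ Uₙ. -/
def IsAdmissible {G : Type*} [Group G] [TopologicalSpace G] (N : Set G) : Prop :=
  ∃ U : ℕ → Set G,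
    (∀ n, IsOpen (U n) ∧ (1 : G) ∈ U n ∧ (U n)⁻¹ = U n) ∧
    (∀ n, U (n + 1) * U (n + 1) ⊆ U n) ∧ N = ⋂ n, U n

/-- A (para)topological group is ω-narrow if each neighborhood of the identity translates
over a countable set to cover the group. -/
def OmegaNarrow (G : Type*) [Group G] [TopologicalSpace G] : Prop :=
  ∀ U ∈ 𝓝 (1 : G), ∃ A : Set G, A.Countable ∧ A * U = Set.univ ∧ U * A = Set.univ

lemma aux_shrink {G : Type*} [Group G] [TopologicalSpace G] [IsTopologicalGroup G]
    {S : Set G} (hS : S ∈ 𝓝 (1 : G)) :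
    ∃ V : Set G, (IsOpen V ∧ (1:G) ∈ V ∧ V⁻¹ = V) ∧ V * V ⊆ S := by
  obtain ⟨O, hOo, hO1, hOS⟩ := exists_open_nhds_one_mul_subset hS
  refine ⟨O ∩ O⁻¹, ⟨hOo.inter hOo.inv, ⟨hO1, by simpa using hO1⟩, by
    ext x; simp [and_comm]⟩, ?_⟩
  exact fun x hx => hOS (Set.mul_subset_mul (Set.inter_subset_left) (Set.inter_subset_left) hx)

lemma aux_metrizable_seq (M : Type*) [Group M] [TopologicalSpace M] [IsTopologicalGroup M]
    [MetrizableSpace M] :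
    ∃ W : ℕ → Set M,
      (∀ n, IsOpen (W n) ∧ (1:M) ∈ W n ∧ (W n)⁻¹ = W n) ∧
      (∀ n, W (n+1) * W (n+1) ⊆ W n) ∧ (⋂ n, W n) = {1} := by
  obtain ⟨u, hu⟩ := (𝓝 (1:M)).exists_antitone_basis
  have hmem : ∀ (S : {S : Set M // IsOpen S ∧ (1:M) ∈ S ∧ S⁻¹ = S}), (S : Set M) ∈ 𝓝 (1:M) := fun S => S.2.1.mem_nhds S.2.2.1
  have step : ∀ (n : ℕ) (S : {S : Set M // IsOpen S ∧ (1:M) ∈ S ∧ S⁻¹ = S}), ∃ S' : {S : Set M // IsOpen S ∧ (1:M) ∈ S ∧ S⁻¹ = S}, (S' : Set M) * S' ⊆ S ∧ (S' : Set M) ⊆ u (n+1) := by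
    intro n S
    have h : (S : Set M) ∩ u (n+1) ∈ 𝓝 (1:M) :=
      Filter.inter_mem (hmem S) (hu.toHasBasis.mem_of_mem trivial)
    obtain ⟨V, hV, hVsub⟩ := aux_shrink h
    refine ⟨⟨V, hV⟩, fun x hx => (hVsub hx).1, fun x hx => ?_⟩
    have := (hVsub (Set.mul_mem_mul hx hV.2.1)).2
    rwa [mul_one] at this
  obtain ⟨V0, hV0, hV0sub⟩ := aux_shrink (hu.toHasBasis.mem_of_mem (i := 0) trivial)
  have hV0u : V0 ⊆ u 0 := fun x hx => by
    have := hV0sub (Set.mul_mem_mul hx hV0.2.1); rwa [mul_one] at this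
  choose f hf1 hf2 using step
  let seq : ℕ → {S : Set M // IsOpen S ∧ (1:M) ∈ S ∧ S⁻¹ = S} := fun n => Nat.rec ⟨V0, hV0⟩ f n
  have hseq : ∀ n, seq (n+1) = f n (seq n) := fun n => rfl
  refine ⟨fun n => (seq n).1, fun n => (seq n).2, fun n => ?_, ?_⟩
  · have h := hf1 n (seq n)
    rw [← hseq n] at h
    exact h
  have hsub : ∀ n, (seq n).1 ⊆ u n := by
    intro n; cases n with
    | zero => exact hV0u
    | succ k =>
      have h := hf2 k (seq k)
      rw [← hseq k] at h
      exact h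
  apply Set.Subset.antisymm
  · intro x hx
    simp only [Set.mem_iInter] at hx
    by_contra hne
    have hne' : x ≠ 1 := hne
    have hc : {x}ᶜ ∈ 𝓝 (1:M) := compl_singleton_mem_nhds (Ne.symm hne')
    obtain ⟨n, -, hn⟩ := hu.toHasBasis.mem_iff.1 hc
    exact hn (hsub n (hx n)) rfl
  · intro x hx
    simp only [Set.mem_singleton_iff] at hx
    subst hx
    exact Set.mem_iInter.2 fun n => (seq n).2.2.1

private def dec3 (n : ℕ) : ℕ × ℕ × ℕ := Denumerable.ofNat (ℕ × ℕ × ℕ) n.unpair.2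

private lemma dec3_spec (t : ℕ × ℕ × ℕ) (b : ℕ) : ∃ n, b ≤ n ∧ dec3 n = t := by
  refine ⟨Nat.pair b (Encodable.encode t), Nat.left_le_pair _ _, ?_⟩
  show Denumerable.ofNat _ (Nat.unpair (Nat.pair b (Encodable.encode t))).2 = t
  rw [Nat.unpair_pair]
  exact Denumerable.ofNat_encode t

private def GInv {H : Type*} [Group H] [TopologicalSpace H]
    (ee : Set H → ℕ → H) (W : ℕ → Set H) (n : ℕ) (S : ℕ → Set H) : Prop :=
  (∀ i, IsOpen (S i) ∧ (1:H) ∈ S i ∧ (S i)⁻¹ = S i) ∧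
  (∀ i ≤ n, S i ⊆ W i) ∧
  (∀ i < n, S (i+1) * S (i+1) ⊆ S i) ∧
  (∀ i < n, (dec3 i).1 ≤ i → (dec3 i).2.2 ≤ i →
    ∀ x ∈ S (i+1),
      ee (S (dec3 i).1) (dec3 i).2.1 * x * (ee (S (dec3 i).1) (dec3 i).2.1)⁻¹ ∈ S (dec3 i).2.2)

lemma aux_guran {H : Type*} [Group H] [TopologicalSpace H] [IsTopologicalGroup H]
    (hH : OmegaNarrow H) (W : ℕ → Set H) (hWo : ∀ n, IsOpen (W n)) (hW1 : ∀ n, (1:H) ∈ W n) :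
    ∃ (V : ℕ → Set H) (E : ℕ → ℕ → H),
      (∀ n, IsOpen (V n) ∧ (1:H) ∈ V n ∧ (V n)⁻¹ = V n) ∧
      (∀ n, V (n+1) * V (n+1) ⊆ V n) ∧
      (∀ n, V n ⊆ W n) ∧
      (∀ n, Set.range (E n) * V n = Set.univ ∧ V n * Set.range (E n) = Set.univ) ∧
      (∀ (g : H) (j : ℕ), ∃ m, ∀ x ∈ V m, g * x * g⁻¹ ∈ V j) := by
  classical
  -- a total enumeration function for the ω-narrow witnesses
  have hee0 : ∀ S : Set H, ∃ g : ℕ → H,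
      S ∈ 𝓝 (1:H) → (Set.range g * S = Set.univ ∧ S * Set.range g = Set.univ) := by
    intro S
    by_cases hS : S ∈ 𝓝 (1:H)
    · obtain ⟨A, hAc, hA1, hA2⟩ := hH S hS
      have hAne : A.Nonempty := by
        by_contra h
        rw [Set.not_nonempty_iff_eq_empty] at h
        subst h
        rw [Set.empty_mul] at hA1
        exact (Set.univ_nonempty (α := H)).ne_empty hA1.symm
      obtain ⟨g, hg⟩ := hAc.exists_eq_range hAne
      exact ⟨g, fun _ => by rw [← hg]; exact ⟨hA1, hA2⟩⟩
    · exact ⟨fun _ => 1, fun h => absurd h hS⟩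
  choose ee heeP using hee0
  -- the recursive construction step
  have hstep : ∀ n (S : ℕ → Set H), GInv ee W n S → ∃ S' : ℕ → Set H,
      GInv ee W (n+1) S' ∧ ∀ i ≤ n, S' i = S i := by
    intro n S hS
    set a := ee (S (dec3 n).1) (dec3 n).2.1 with ha
    have hconj_cont : Continuous (fun x : H => a * x * a⁻¹) := by continuity
    have hTmem : ((fun x : H => a * x * a⁻¹) ⁻¹' S (dec3 n).2.2) ∈ 𝓝 (1:H) := by
      apply ContinuousAt.preimage_mem_nhds (hconj_cont.continuousAt)
      simpa using (hS.1 (dec3 n).2.2).1.mem_nhds (hS.1 (dec3 n).2.2).2.1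
    have hmem : S n ∩ (W (n+1) ∩ ((fun x : H => a * x * a⁻¹) ⁻¹' S (dec3 n).2.2)) ∈ 𝓝 (1:H) :=
      Filter.inter_mem ((hS.1 n).1.mem_nhds (hS.1 n).2.1)
        (Filter.inter_mem ((hWo (n+1)).mem_nhds (hW1 (n+1))) hTmem)
    obtain ⟨P, hP, hPsq⟩ := aux_shrink hmem
    have hPsub : P ⊆ S n ∩ (W (n+1) ∩ ((fun x : H => a * x * a⁻¹) ⁻¹' S (dec3 n).2.2)) := by
      intro x hx
      have := hPsq (Set.mul_mem_mul hx hP.2.1)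
      rwa [mul_one] at this
    refine ⟨fun m => if m ≤ n then S m else P, ⟨?_, ?_, ?_, ?_⟩, fun i hi => if_pos hi⟩
    · intro i
      by_cases hi : i ≤ n
      · simpa [hi] using hS.1 i
      · simpa [hi] using hP
    · intro i hi
      by_cases hi' : i ≤ n
      · simpa [hi'] using hS.2.1 i hi'
      · have : i = n + 1 := le_antisymm hi (not_le.1 hi')
        subst this
        simp only [if_neg hi']
        exact fun x hx => (hPsub hx).2.1
    · intro i hi
      rcases Nat.lt_succ_iff_lt_or_eq.1 hi with hi' | hi'
      · have h1 : i + 1 ≤ n := hi'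
        have h2 : i ≤ n := le_of_lt hi'
        simpa [h1, h2] using hS.2.2.1 i hi'
      · subst hi'
        have h1 : ¬ (i + 1 ≤ i) := by omega
        simp only [if_neg h1, if_pos (le_refl i)]
        exact fun x hx => (hPsq hx).1
    · intro i hi hd1 hd2
      rcases Nat.lt_succ_iff_lt_or_eq.1 hi with hi' | hi'
      · have h1 : i + 1 ≤ n := hi'
        have h2 : (dec3 i).1 ≤ n := le_trans hd1 (le_of_lt hi')
        have h3 : (dec3 i).2.2 ≤ n := le_trans hd2 (le_of_lt hi')
        simpa [h1, h2, h3] using hS.2.2.2 i hi' hd1 hd2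
      · subst hi'
        have h1 : ¬ (i + 1 ≤ i) := by omega
        simp only [if_neg h1, if_pos hd1, if_pos hd2]
        intro x hx
        have := (hPsub hx).2.2
        simpa [ha] using this
  -- base case
  have hbase : GInv ee W 0 (fun _ => W 0 ∩ (W 0)⁻¹) := by
    refine ⟨fun i => ⟨(hWo 0).inter (hWo 0).inv, ⟨hW1 0, by simpa using hW1 0⟩, by
      ext x; simp [and_comm]⟩, fun i hi => ?_, fun i hi => absurd hi (Nat.not_lt_zero i),
      fun i hi => absurd hi (Nat.not_lt_zero i)⟩
    interval_cases i
    exact Set.inter_subset_left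
  choose stepf hstep1 hstep2 using hstep
  let chain : ∀ n : ℕ, {S : ℕ → Set H // GInv ee W n S} := fun n =>
    Nat.rec ⟨_, hbase⟩ (fun n prev => ⟨stepf n prev.1 prev.2, hstep1 n prev.1 prev.2⟩) n
  have hagree : ∀ n i, i ≤ n → (chain (n+1)).1 i = (chain n).1 i := fun n i hi =>
    hstep2 n (chain n).1 (chain n).2 i hi
  have hVeq : ∀ n m, n ≤ m → (chain m).1 n = (chain n).1 n := by
    intro n m hm
    induction m with
    | zero => cases Nat.le_zero.1 hm; rfl
    | succ k ih =>
      by_cases h : n ≤ k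
      · rw [hagree k n h]; exact ih h
      · have : n = k + 1 := by omega
        subst this; rfl
  set V : ℕ → Set H := fun n => (chain n).1 n with hV
  have hVprops : ∀ n, IsOpen (V n) ∧ (1:H) ∈ V n ∧ (V n)⁻¹ = V n := fun n => (chain n).2.1 n
  have hVsq : ∀ n, V (n+1) * V (n+1) ⊆ V n := by
    intro n
    have h := (chain (n+1)).2.2.2.1 n (Nat.lt_succ_self n)
    rwa [hVeq n (n+1) (Nat.le_succ n)] at h
  have hVW : ∀ n, V n ⊆ W n := fun n => (chain n).2.2.1 n (le_refl n)
  have hVnhds : ∀ n, V n ∈ 𝓝 (1:H) := fun n => (hVprops n).1.mem_nhds (hVprops n).2.1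
  have htask : ∀ i, (dec3 i).1 ≤ i → (dec3 i).2.2 ≤ i →
      ∀ x ∈ V (i+1), ee (V (dec3 i).1) (dec3 i).2.1 * x * (ee (V (dec3 i).1) (dec3 i).2.1)⁻¹ ∈
        V (dec3 i).2.2 := by
    intro i hd1 hd2
    have h := (chain (i+1)).2.2.2.2 i (Nat.lt_succ_self i) hd1 hd2
    rwa [hVeq (dec3 i).1 (i+1) (le_trans hd1 (Nat.le_succ i)),
      hVeq (dec3 i).2.2 (i+1) (le_trans hd2 (Nat.le_succ i))] at h
  have hmono : ∀ n, V (n+1) ⊆ V n := by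
    intro n x hx
    have := hVsq n (Set.mul_mem_mul hx (hVprops (n+1)).2.1)
    rwa [mul_one] at this
  refine ⟨V, fun n => ee (V n), hVprops, hVsq, hVW, fun n => heeP (V n) (hVnhds n), ?_⟩
  intro g j
  have h2 := (heeP (V (j+2)) (hVnhds (j+2))).2
  have hg : g ∈ V (j+2) * Set.range (ee (V (j+2))) := h2 ▸ Set.mem_univ g
  obtain ⟨v, hv, -, ⟨k, rfl⟩, hvk⟩ := Set.mem_mul.1 hg
  obtain ⟨m, hm, hdm⟩ := dec3_spec (j+2, k, j+2) (j+2)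
  have htk := htask m
  rw [hdm] at htk
  have htk' := htk hm hm
  refine ⟨m+1, fun x hx => ?_⟩
  have hy : ee (V (j+2)) k * x * (ee (V (j+2)) k)⁻¹ ∈ V (j+2) := htk' x hx
  have hvinv : v⁻¹ ∈ V (j+2) := by
    rw [← (hVprops (j+2)).2.2]; simpa using hv
  have hprod : v * (ee (V (j+2)) k * x * (ee (V (j+2)) k)⁻¹) * v⁻¹ ∈ V j := by
    apply hVsq j
    apply Set.mul_mem_mul
    · exact hVsq (j+1) (Set.mul_mem_mul hv hy)
    · exact hmono (j+1) hvinv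
  have heq : g * x * g⁻¹ = v * (ee (V (j+2)) k * x * (ee (V (j+2)) k)⁻¹) * v⁻¹ := by
    rw [← hvk]; group
  rwa [heq]


/-- If a continuous surjective homomorphism of topological groups sends every normal admissible
subgroup onto a set containing a normal admissible subgroup, the domain is simply
sm-factorizable, and the codomain is ω-narrow, then the codomain is simply sm-factorizable. -/
theorem statement11 {G H : Type*} [Group G] [TopologicalSpace G] [IsTopologicalGroup G]
    [Group H] [TopologicalSpace H] [IsTopologicalGroup H]
    (π : G →* H) (hc : Continuous π) (hs : Surjective π)
    (him : ∀ K : Subgroup G, K.Normal → IsAdmissible (K : Set G) →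
      ∃ L : Subgroup H, L.Normal ∧ IsAdmissible (L : Set H) ∧ (L : Set H) ⊆ ⇑π '' (K : Set G))
    (hG : SimplySMFactorizable G) (hH : OmegaNarrow H) :
    SimplySMFactorizable H := by
  intro U hU
  classical
  obtain ⟨f, hf, hUf⟩ := hU
  have hVcoz : IsCozero (⇑π ⁻¹' U) := ⟨f ∘ π, hf.comp hc, by rw [hUf]; rfl⟩
  obtain ⟨M, gM, tM, hM⟩ := hG _ hVcoz
  letI := gM
  letI := tM
  obtain ⟨hTGM, hSepM, hMetM, p, hpc, hps, hpsat⟩ := hM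
  haveI := hTGM
  haveI := hMetM
  -- the kernel of p is an admissible normal subgroup of G
  obtain ⟨Wm, hWmp, hWmsq, hWmint⟩ := aux_metrizable_seq M
  have hKadm : IsAdmissible ((p.ker : Subgroup G) : Set G) := by
    refine ⟨fun n => ⇑p ⁻¹' Wm n,
      fun n => ⟨(hWmp n).1.preimage hpc, by simp [(hWmp n).2.1], ?_⟩, ?_, ?_⟩
    · ext x
      have h1 := Set.ext_iff.1 (hWmp n).2.2 (p x)
      rw [Set.mem_inv] at h1
      simp only [Set.mem_inv, Set.mem_preimage, map_inv]
      exact h1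
    · intro n x hx
      obtain ⟨y, hy, z, hz, rfl⟩ := Set.mem_mul.1 hx
      simp only [Set.mem_preimage, map_mul]
      exact hWmsq n (Set.mul_mem_mul hy hz)
    · rw [MonoidHom.coe_ker, ← Set.preimage_iInter, hWmint]
  obtain ⟨L, hLn, ⟨Wl, hWlp, hWlsq, hWlint⟩, hLsub⟩ := him p.ker (MonoidHom.normal_ker p) hKadm
  -- U is saturated with respect to L
  have hUsat : ∀ u ∈ U, ∀ l ∈ (L : Set H), u * l ∈ U := by
    intro u hu l hl
    obtain ⟨k, hk, rfl⟩ := hLsub hl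
    obtain ⟨g, rfl⟩ := hs u
    rw [← map_mul]
    have hgk : g * k ∈ ⇑p ⁻¹' (⇑p '' (⇑π ⁻¹' U)) := by
      simp only [Set.mem_preimage, map_mul]
      have hk1 : p k = 1 := hk
      rw [hk1, mul_one]
      exact Set.mem_image_of_mem _ hu
    rw [hpsat] at hgk
    exact hgk
  -- refine the admissible sequence of L using ω-narrowness
  obtain ⟨Vs, E, hVp, hVsq, hVW, hVA, hVconj⟩ :=
    aux_guran hH Wl (fun n => (hWlp n).1) (fun n => (hWlp n).2.1)
  have hmono : ∀ n, Vs (n+1) ⊆ Vs n := by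
    intro n x hx
    have := hVsq n (Set.mul_mem_mul hx (hVp (n+1)).2.1)
    rwa [mul_one] at this
  have hanti : ∀ m n, m ≤ n → Vs n ⊆ Vs m := by
    intro m n hmn
    induction hmn with
    | refl => exact le_refl _
    | step h ih => exact fun x hx => ih (hmono _ hx)
  have hVnhds : ∀ n, Vs n ∈ 𝓝 (1:H) := fun n => (hVp n).1.mem_nhds (hVp n).2.1
  -- the subgroup N = ⋂ Vs
  let N' : Subgroup H :=
    { carrier := ⋂ n, Vs n
      one_mem' := Set.mem_iInter.2 fun n => (hVp n).2.1
      mul_mem' := fun {x y} hx hy => Set.mem_iInter.2 fun n =>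
        hVsq n (Set.mul_mem_mul (Set.mem_iInter.1 hx (n+1)) (Set.mem_iInter.1 hy (n+1)))
      inv_mem' := fun {x} hx => Set.mem_iInter.2 fun n => by
        rw [← (hVp n).2.2]
        exact Set.inv_mem_inv.2 (Set.mem_iInter.1 hx n) }
  have hNmem : ∀ x, x ∈ N' ↔ ∀ n, x ∈ Vs n := fun x => Set.mem_iInter
  haveI hNnormal : N'.Normal := by
    constructor
    intro x hx g
    rw [hNmem] at hx ⊢
    intro j
    obtain ⟨m, hm⟩ := hVconj g j
    exact hm x (hx m)
  have hNsubL : (N' : Set H) ⊆ (L : Set H) := by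
    intro x hx
    rw [hWlint]
    exact Set.mem_iInter.2 fun n => hVW n (Set.mem_iInter.1 hx n)
  set q := QuotientGroup.mk' N' with hq
  have hqs : Surjective ⇑q := QuotientGroup.mk'_surjective N'
  -- saturation of U with respect to q
  have hsatq : ⇑q ⁻¹' (⇑q '' U) = U := by
    apply Set.Subset.antisymm
    · rintro x ⟨u, hu, hux⟩
      obtain ⟨z, hz, hzx⟩ := (QuotientGroup.mk'_eq_mk' N').1 hux
      rw [← hzx]
      exact hUsat u hu z (hNsubL hz)
    · exact Set.subset_preimage_image _ _
  -- group filter basis on the quotient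
  let B : GroupFilterBasis (H ⧸ N') :=
    { sets := {S | ∃ n, S = ⇑q '' Vs n}
      nonempty := ⟨⇑q '' Vs 0, 0, rfl⟩
      inter_sets := by
        rintro x y ⟨n, rfl⟩ ⟨m, rfl⟩
        exact ⟨⇑q '' Vs (max n m), ⟨max n m, rfl⟩,
          Set.subset_inter (Set.image_mono (hanti n _ (le_max_left n m)))
            (Set.image_mono (hanti m _ (le_max_right n m)))⟩
      one' := by
        rintro S ⟨n, rfl⟩
        exact ⟨1, (hVp n).2.1, map_one q⟩
      mul' := by
        rintro S ⟨n, rfl⟩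
        refine ⟨⇑q '' Vs (n+1), ⟨n+1, rfl⟩, ?_⟩
        rintro x hx
        obtain ⟨a, ⟨u, hu, rfl⟩, b, ⟨v, hv, rfl⟩, rfl⟩ := Set.mem_mul.1 hx
        rw [← map_mul]
        exact Set.mem_image_of_mem _ (hVsq n (Set.mul_mem_mul hu hv))
      inv' := by
        rintro S ⟨n, rfl⟩
        refine ⟨⇑q '' Vs n, ⟨n, rfl⟩, ?_⟩
        rintro x ⟨v, hv, rfl⟩
        show (q v)⁻¹ ∈ ⇑q '' Vs n
        rw [← map_inv]
        refine Set.mem_image_of_mem _ ?_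
        rw [← (hVp n).2.2]
        exact Set.inv_mem_inv.2 hv
      conj' := by
        intro x₀ S hS
        obtain ⟨j, rfl⟩ := hS
        obtain ⟨g, rfl⟩ := hqs x₀
        obtain ⟨m, hm⟩ := hVconj g j
        refine ⟨⇑q '' Vs m, ⟨m, rfl⟩, ?_⟩
        rintro x ⟨v, hv, rfl⟩
        show q g * q v * (q g)⁻¹ ∈ ⇑q '' Vs j
        rw [← map_inv, ← map_mul, ← map_mul]
        exact Set.mem_image_of_mem _ (hm v hv) }
  have hmemB : ∀ S : Set (H ⧸ N'), S ∈ B ↔ ∃ n, S = ⇑q '' Vs n := fun S => Iff.rfl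
  letI τ : TopologicalSpace (H ⧸ N') := B.topology
  haveI hTGQ : IsTopologicalGroup (H ⧸ N') := B.isTopologicalGroup
  -- q is continuous
  have hqcont : Continuous ⇑q := by
    apply continuous_of_continuousAt_one q
    rw [ContinuousAt, map_one, (B.nhds_one_hasBasis).tendsto_right_iff]
    rintro S ⟨n, rfl⟩
    exact Filter.mem_of_superset (hVnhds n) (fun x hx => Set.mem_image_of_mem _ hx)
  -- points of the quotient are separated by the basic sets
  have hInter : ∀ z : H ⧸ N', (∀ n, z ∈ ⇑q '' Vs n) → z = 1 := by
    intro z hz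
    obtain ⟨g, rfl⟩ := hqs z
    have hg : ∀ n, g ∈ Vs n := by
      intro n
      obtain ⟨v, hv, hvq⟩ := hz (n+1)
      obtain ⟨w, hw, hwg⟩ := (QuotientGroup.mk'_eq_mk' N').1 hvq
      rw [← hwg]
      exact hVsq n (Set.mul_mem_mul hv ((hNmem w).1 hw (n+1)))
    have hgN : g ∈ N' := (hNmem g).2 hg
    show q g = 1
    rw [hq]
    exact (QuotientGroup.eq_one_iff g).2 hgN
  -- T1 separation
  haveI hT1 : T1Space (H ⧸ N') := by
    apply IsTopologicalGroup.t1Space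
    rw [← isOpen_compl_iff, isOpen_iff_mem_nhds]
    intro x hx
    have hex : ∃ n, x ∉ ⇑q '' Vs n := by
      by_contra h
      push_neg at h
      exact hx (hInter x h)
    obtain ⟨n, hn⟩ := hex
    rw [(B.nhds_hasBasis x).mem_iff]
    refine ⟨⇑q '' Vs n, ⟨n, rfl⟩, ?_⟩
    rintro y ⟨z, ⟨v, hv, rfl⟩, rfl⟩
    intro hy
    rw [Set.mem_singleton_iff] at hy
    apply hn
    have hxv : x = q v⁻¹ := by
      rw [map_inv]
      exact eq_inv_of_mul_eq_one_left hy
    rw [hxv]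
    refine Set.mem_image_of_mem _ ?_
    rw [← (hVp n).2.2]
    exact Set.inv_mem_inv.2 hv
  -- countable basis at the identity
  have hbasis : (𝓝 (1 : H ⧸ N')).HasBasis (fun _ : ℕ => True) (fun n => ⇑q '' Vs n) := by
    apply (B.nhds_one_hasBasis).to_hasBasis
    · rintro S ⟨n, rfl⟩
      exact ⟨n, trivial, le_refl _⟩
    · intro n _
      exact ⟨⇑q '' Vs n, ⟨n, rfl⟩, le_refl _⟩
  -- metrizability
  have hMetQ : MetrizableSpace (H ⧸ N') := by
    letI us : UniformSpace (H ⧸ N') := IsTopologicalGroup.rightUniformSpace (H ⧸ N')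
    haveI hcg : (uniformity (H ⧸ N')).IsCountablyGenerated := by
      haveI := hbasis.isCountablyGenerated
      show Filter.IsCountablyGenerated
        (Filter.comap (fun p : (H ⧸ N') × (H ⧸ N') => p.2 * p.1⁻¹) (𝓝 1))
      exact Filter.comap.isCountablyGenerated _ _
    exact UniformSpace.metrizableSpace
  haveI := hMetQ
  -- separability
  haveI hSepQ : SeparableSpace (H ⧸ N') := by
    refine ⟨⟨Set.range (fun pk : ℕ × ℕ => q (E pk.1 pk.2)), Set.countable_range _, ?_⟩⟩
    intro x
    rw [mem_closure_iff_nhds_basis (B.nhds_hasBasis x)]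
    rintro S ⟨n, rfl⟩
    obtain ⟨g, rfl⟩ := hqs x
    have hg : g ∈ Set.range (E n) * Vs n := (hVA n).1 ▸ Set.mem_univ g
    obtain ⟨a, ⟨k, rfl⟩, v, hv, hag⟩ := Set.mem_mul.1 hg
    refine ⟨q (E n k), ⟨⟨n, k⟩, rfl⟩, q v⁻¹, ?_, ?_⟩
    · refine Set.mem_image_of_mem _ ?_
      rw [← (hVp n).2.2]
      exact Set.inv_mem_inv.2 hv
    · show q g * q v⁻¹ = q (E n k)
      rw [← map_mul, ← hag]
      simp
  -- inject the quotient into a small type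
  have hφ : ∃ φ : (H ⧸ N') → Set (ℕ × ℕ), Injective φ := by
    refine ⟨fun x => {pk | ∃ v ∈ Vs (pk.2+1), x = q (E (pk.2+1) pk.1) * q v}, ?_⟩
    intro x y hxy
    have hmem : ∀ n, x⁻¹ * y ∈ ⇑q '' Vs n := by
      intro n
      obtain ⟨g, rfl⟩ := hqs x
      have hg : g ∈ Set.range (E (n+1)) * Vs (n+1) := (hVA (n+1)).1 ▸ Set.mem_univ g
      obtain ⟨a, ⟨k, rfl⟩, v, hv, hag⟩ := Set.mem_mul.1 hg
      have hx : ((k, n) : ℕ × ℕ) ∈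
          (fun x => {pk : ℕ × ℕ | ∃ v ∈ Vs (pk.2+1), x = q (E (pk.2+1) pk.1) * q v}) (q g) :=
        ⟨v, hv, by rw [← map_mul, hag]⟩
      rw [hxy] at hx
      obtain ⟨v', hv', hy⟩ := hx
      have hvinv : v⁻¹ ∈ Vs (n+1) := by
        rw [← (hVp (n+1)).2.2]
        exact Set.inv_mem_inv.2 hv
      have heq : (q g)⁻¹ * y = q (v⁻¹ * v') := by
        rw [hy, ← hag]
        simp only [map_mul, map_inv]
        group
      rw [heq]
      exact Set.mem_image_of_mem _ (hVsq n (Set.mul_mem_mul hvinv hv'))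
    have h1 : x⁻¹ * y = 1 := hInter _ hmem
    rwa [inv_mul_eq_one] at h1
  obtain ⟨φ, hφinj⟩ := hφ
  haveI hSmall : Small.{0} (H ⧸ N') := small_of_injective hφinj
  let σ : Shrink.{0} (H ⧸ N') ≃* (H ⧸ N') := Shrink.mulEquiv
  letI tH0 : TopologicalSpace (Shrink.{0} (H ⧸ N')) := TopologicalSpace.induced (⇑σ) τ
  have hind : Topology.IsInducing ⇑σ := ⟨rfl⟩
  haveI hTG0 : IsTopologicalGroup (Shrink.{0} (H ⧸ N')) := hind.topologicalGroup σ
  let homeo : Shrink.{0} (H ⧸ N') ≃ₜ (H ⧸ N') := Equiv.toHomeomorphOfIsInducing σ.toEquiv hind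
  haveI hSep0 : SeparableSpace (Shrink.{0} (H ⧸ N')) :=
    (homeo.symm.surjective.denseRange).separableSpace homeo.symm.continuous
  haveI hMet0 : MetrizableSpace (Shrink.{0} (H ⧸ N')) := homeo.isEmbedding.metrizableSpace
  refine ⟨Shrink.{0} (H ⧸ N'), inferInstance, tH0, hTG0, hSep0, hMet0,
    σ.symm.toMonoidHom.comp q, ?_, ?_, ?_⟩
  · show Continuous (⇑σ.symm ∘ ⇑q)
    exact Continuous.comp homeo.symm.continuous hqcont
  · show Surjective (⇑σ.symm ∘ ⇑q)
    exact Function.Surjective.comp σ.symm.surjective hqs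
  · show (⇑σ.symm ∘ ⇑q) ⁻¹' ((⇑σ.symm ∘ ⇑q) '' U) = U
    rw [Set.image_comp, Set.preimage_comp, Set.preimage_image_eq _ σ.symm.injective, hsatq]
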